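/- Let I be a category, let C be a category with all limits of shape I, and let L : A ⥤ 𝓛 be a bijective-on-objects functor between categories. Then the precomposition functor L* : [𝓛, C] → [A, C], F ↦ L ⋙ F, creates limits of shape I. Dually, if C has all colimits of shape I, then L* creates colimits of shape I. -/

import Mathlib

open CategoryTheory CategoryTheory.Limits

universe w₁ w₂ v₁ u₁ v₂ u₂ v₃ u₃

lemma whiskeringLeft_reflectsIsomorphisms_of_surjective
    {A : Type u₁} [Category.{v₁} A] {𝓛 : Type u₂} [Category.{v₂} 𝓛]
    {C : Type u₃} [Category.{v₃} C]
    (L : A ⥤ 𝓛) (hL : Function.Surjective L.obj) :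
    ((Functor.whiskeringLeft A 𝓛 C).obj L).ReflectsIsomorphisms := by
  constructor
  intro F G α hα
  have : ∀ ℓ : 𝓛, IsIso (α.app ℓ) := by
    intro ℓ
    obtain ⟨a, rfl⟩ := hL ℓ
    exact inferInstanceAs (IsIso ((((Functor.whiskeringLeft A 𝓛 C).obj L).map α).app a))
  exact NatIso.isIso_of_isIso_app α

/-- Statement 3: if `L : A ⥤ 𝓛` is bijective on objects and `C` has (co)limits of shape `I`,
then precomposition with `L`, i.e. `L* : [𝓛, C] ⥤ [A, C]`, creates (co)limits of shape `I`. -/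
theorem whiskeringLeft_creates_limits_of_bijective_on_objects
    {A : Type u₁} [Category.{v₁} A] {𝓛 : Type u₂} [Category.{v₂} 𝓛]
    {C : Type u₃} [Category.{v₃} C] {I : Type w₁} [Category.{w₂} I]
    (L : A ⥤ 𝓛) (hL : Function.Bijective L.obj) :
    (HasLimitsOfShape I C →
      Nonempty (CreatesLimitsOfShape I ((Functor.whiskeringLeft A 𝓛 C).obj L))) ∧
    (HasColimitsOfShape I C →
      Nonempty (CreatesColimitsOfShape I ((Functor.whiskeringLeft A 𝓛 C).obj L))) := by
  have := whiskeringLeft_reflectsIsomorphisms_of_surjective (C := C) L hL.2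
  constructor
  · intro h
    refine ⟨⟨fun {K} => ?_⟩⟩
    have hK : IsLimit (limit.cone K) := limit.isLimit K
    exact createsLimitOfReflectsIso fun c t =>
      { liftedCone := limit.cone K
        validLift := IsLimit.uniqueUpToIso
          (isLimitOfPreserves ((Functor.whiskeringLeft A 𝓛 C).obj L) hK) t
        makesLimit := hK }
  · intro h
    refine ⟨⟨fun {K} => ?_⟩⟩
    have hK : IsColimit (colimit.cocone K) := colimit.isColimit K
    exact createsColimitOfReflectsIso fun c t =>
      { liftedCocone := colimit.cocone K
        validLift := IsColimit.uniqueUpToIso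
          (isColimitOfPreserves ((Functor.whiskeringLeft A 𝓛 C).obj L) hK) t
        makesColimit := hK }
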